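/- arXiv:math/0502107 — 2 statements merged into one kernel-verified Lean document; each statement's English description precedes it below -/
import Mathlib

section
/- For every partition λ, the rook poset P_λ has a maximum element 1̂, given by the greedy placement (for i = 1, 2, …, n in turn, place the rook of row i in the largest column ≤ λ_i not used by a lower row), and a minimum element 0̂ = (1, 2, …, n). -/
namespace RookPoset

/-- A partition with `n` parts: `part i` is the (1-based) part `λ_{i+1}`.
The parts are weakly increasing and contain the staircase (`λ_i ≥ i`, 1-based),
which in particular makes them positive. -/
structure Partition (n : ℕ) where
  part : Fin n → ℕ
  mono : Monotone part
  staircase : ∀ i : Fin n, (i : ℕ) + 1 ≤ part i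

/-- The largest part; equals `λ_n` when `n > 0`. -/
def Partition.maxPart {n : ℕ} (lam : Partition n) : ℕ :=
  Finset.univ.sup lam.part

/-- The part `λ_k` in 1-based indexing, with the convention `λ_m = n + 1` for `m > n`. -/
def Partition.partAt {n : ℕ} (lam : Partition n) (k : ℕ) : ℕ :=
  if h : 1 ≤ k ∧ k ≤ n then lam.part ⟨k - 1, by omega⟩ else n + 1

/-- The GJW sequence `(λ_1 - 1, λ_2 - 2, …, λ_n - n)` of a partition. -/
def Partition.gjw {n : ℕ} (lam : Partition n) : List ℕ :=
  (List.finRange n).map fun i => lam.part i - ((i : ℕ) + 1)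

/-- A maximal rook placement on the Ferrers board of `lam`: `col i` is the (1-based)
column of the rook in the (1-based) row `i + 1` (rows indexed bottom-up). -/
structure Placement {n : ℕ} (lam : Partition n) where
  col : Fin n → ℕ
  inj : Function.Injective col
  pos : ∀ i, 1 ≤ col i
  le_part : ∀ i, col i ≤ lam.part i

/-- The increasingly sorted list of the values `x i` over indices `i` with `(i : ℕ) < j`,
i.e. the sorted initial segment `{x_1, …, x_j}` (1-based). -/
def initSeg {n : ℕ} (x : Fin n → ℕ) (j : ℕ) : List ℕ :=
  ((Finset.univ.filter fun i : Fin n => (i : ℕ) < j).image x).sort (· ≤ ·)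

/-- The rook poset order: `x ≤ y` iff each sorted initial segment of `x` is
componentwise at most the corresponding sorted initial segment of `y`. -/
def rle {n : ℕ} {lam : Partition n} (x y : Placement lam) : Prop :=
  ∀ j : ℕ, List.Forall₂ (· ≤ ·) (initSeg x.col j) (initSeg y.col j)

/-- `y` covers `x` in the rook poset. -/
def rcovers {n : ℕ} {lam : Partition n} (x y : Placement lam) : Prop :=
  rle x y ∧ x ≠ y ∧ ∀ z : Placement lam, rle x z → rle z y → z = x ∨ z = y

/-- `y` covers `x` in the subposet induced on `S`. -/
def rcoversIn {n : ℕ} {lam : Partition n} (S : Set (Placement lam)) (x y : Placement lam) :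
    Prop :=
  x ∈ S ∧ y ∈ S ∧ rle x y ∧ x ≠ y ∧ ∀ z ∈ S, rle x z → rle z y → z = x ∨ z = y

/-- `t` is the greedy placement `1̂`: for each row in turn (bottom-up), the rook is placed
in the largest column `≤ λ_i` not used by a lower row. -/
def IsGreedy {n : ℕ} {lam : Partition n} (t : Placement lam) : Prop :=
  ∀ i : Fin n, ∀ m : ℕ, 1 ≤ m → m ≤ lam.part i →
    (∀ k : Fin n, k < i → t.col k ≠ m) → m ≤ t.col i

/-- `x` is obtained from `y` by the switch move on the rooks in rows `i < k`:
the rectangle spanned by the rooks at `(i, y.col i)` and `(k, y.col k)` contains no other rook,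
and the two rooks exchange columns. -/
def SwitchMove {n : ℕ} {lam : Partition n} (y x : Placement lam) (i k : Fin n) : Prop :=
  i < k ∧ y.col k < y.col i ∧
  (∀ r : Fin n, i ≤ r → r ≤ k → y.col k ≤ y.col r → y.col r ≤ y.col i → r = i ∨ r = k) ∧
  x.col i = y.col k ∧ x.col k = y.col i ∧
  ∀ r : Fin n, r ≠ i → r ≠ k → x.col r = y.col r

/-- `x` is obtained from `y` by a push move on the rook in row `i`: the rook moves to an
empty column `c` to its left such that every column strictly between `c` and its old column
contains a rook in a row below row `i`. -/
def PushMove {n : ℕ} {lam : Partition n} (y x : Placement lam) (i : Fin n) : Prop :=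
  ∃ c : ℕ, 1 ≤ c ∧ c < y.col i ∧ (∀ r : Fin n, y.col r ≠ c) ∧
    (∀ d : ℕ, c < d → d < y.col i → ∃ r : Fin n, r < i ∧ y.col r = d) ∧
    x.col i = c ∧ ∀ r : Fin n, r ≠ i → x.col r = y.col r

/-- `x` is obtained from `y` by a single switch or push move on the rook in row `i`. -/
def MoveOnRow {n : ℕ} {lam : Partition n} (y x : Placement lam) (i : Fin n) : Prop :=
  (∃ k : Fin n, SwitchMove y x i k) ∨ PushMove y x i

/-- Two coatoms `c, c'` of the rook poset (with top element `t`) are entangled: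
there are two distinct elements each of which is covered by both `c` and `c'`
and lies below no other coatom. -/
def Entangled {n : ℕ} {lam : Partition n} (t c c' : Placement lam) : Prop :=
  ∃ z₁ z₂ : Placement lam, z₁ ≠ z₂ ∧
    (rcovers z₁ c ∧ rcovers z₁ c' ∧
      ∀ d : Placement lam, rcovers d t → d ≠ c → d ≠ c' → ¬ rle z₁ d) ∧
    (rcovers z₂ c ∧ rcovers z₂ c' ∧
      ∀ d : Placement lam, rcovers d t → d ≠ c → d ≠ c' → ¬ rle z₂ d)

/-- `X_I`: the set of elements of the rook poset lying below no coatom outside `I`. -/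
def Xset {n : ℕ} {lam : Partition n} (t : Placement lam) (I : Set (Placement lam)) :
    Set (Placement lam) :=
  {z : Placement lam | ∀ c' : Placement lam, rcovers c' t → c' ∉ I → ¬ rle z c'}

/-- The completed permutation `σ_x` of `{1, …, λ_n}` (as a function on 1-based positions):
position `i ≤ n` holds `x_i`, and the remaining positions hold the unused values in
increasing order (i.e. each subsequent position receives the smallest value not yet used). -/
def Placement.sigma {n : ℕ} {lam : Partition n} (x : Placement lam) : ℕ → ℕ := fun a =>
  if h : 1 ≤ a ∧ a ≤ n then x.col ⟨a - 1, by omega⟩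
  else ((Finset.Icc 1 lam.maxPart \ Finset.univ.image x.col).sort (· ≤ ·)).getD (a - n - 1) 0

/-- The rank `r(x)`: the number of inversions of the completed permutation `σ_x`. -/
def Placement.rank {n : ℕ} {lam : Partition n} (x : Placement lam) : ℕ :=
  ((Finset.Icc 1 lam.maxPart ×ˢ Finset.Icc 1 lam.maxPart).filter
    fun p => p.1 < p.2 ∧ x.sigma p.2 < x.sigma p.1).card

/-- Break a list after every entry equal to `1`. -/
def breakAfterOnes : List ℕ → List (List ℕ)
  | [] => []
  | a :: rest =>
    if a = 1 then [a] :: breakAfterOnes rest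
    else
      match breakAfterOnes rest with
      | [] => [[a]]
      | b :: bs => (a :: b) :: bs

/-- The multiset of blocks of a partition: break the GJW sequence after every entry
equal to `1` and delete all entries equal to `0` (discarding empty blocks). -/
def Partition.blocks {n : ℕ} (lam : Partition n) : Multiset (List ℕ) :=
  (((breakAfterOnes lam.gjw).map fun b => b.filter (· ≠ 0)).filter
    (· ≠ ([] : List ℕ)) : List (List ℕ))

/-- The conjugate of a block `b = (g_1, …, g_k)` ending in `1`: it is the GJW sequence of the
conjugate partition `ν'` of the partition `ν` with `ν_i = g_i + i`, where
`ν'_i = k + 2 - min {m | ν_m ≥ k + 2 - i}` with the convention `ν_{k+1} = k + 1`. -/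
noncomputable def conjBlock (b : List ℕ) : List ℕ :=
  let k := b.length
  let nu : ℕ → ℕ := fun m => if m ≤ k then b.getD (m - 1) 0 + m else k + 1
  (List.range k).map fun i0 =>
    let i := i0 + 1
    (k + 2 - sInf {m : ℕ | 1 ≤ m ∧ k + 2 - i ≤ nu m}) - i

/-- A block ends in `1`. -/
def endsInOne (b : List ℕ) : Prop := b.getLast? = some 1

/-- Two blocks are equivalent when they are equal, or one ends in `1` and the other is its
conjugate block. -/
def BlockEquiv (b b' : List ℕ) : Prop :=
  b = b' ∨ (endsInOne b ∧ b' = conjBlock b) ∨ (endsInOne b' ∧ b = conjBlock b')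

/-- Two partitions have matching block data: their multisets of blocks become equal after
replacing some blocks ending in `1` by their conjugate blocks. -/
def MatchingBlocks {n m : ℕ} (lam : Partition n) (mu : Partition m) : Prop :=
  Multiset.Rel BlockEquiv lam.blocks mu.blocks

/-- The rook posets of `lam` and `mu` are isomorphic as partially ordered sets. -/
def RookIso {n m : ℕ} (lam : Partition n) (mu : Partition m) : Prop :=
  ∃ e : Placement lam ≃ Placement mu, ∀ a b : Placement lam, rle a b ↔ rle (e a) (e b)

/-- A function `τ`, viewed as a permutation of `{1, …, N}`, is `312`-avoiding. -/
def Avoids312 (N : ℕ) (τ : ℕ → ℕ) : Prop :=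
  ∀ a b c : ℕ, 1 ≤ a → a < b → b < c → c ≤ N → ¬ (τ b < τ c ∧ τ c < τ a)

/-- A permutation of `Fin N` is `312`-avoiding. -/
def Avoids312P {N : ℕ} (τ : Equiv.Perm (Fin N)) : Prop :=
  ∀ a b c : Fin N, a < b → b < c → ¬ (τ b < τ c ∧ τ c < τ a)

/-- The Bruhat order on permutations, characterized by componentwise dominance of the
increasingly sorted initial segments. -/
def bruhatLE {N : ℕ} (σ τ : Equiv.Perm (Fin N)) : Prop :=
  ∀ j : ℕ, List.Forall₂ (· ≤ ·)
    (initSeg (fun a : Fin N => (σ a : ℕ)) j) (initSeg (fun a : Fin N => (τ a : ℕ)) j)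



/-! ### Auxiliary machinery -/

private lemma forall₂_of_filter_counts :
    ∀ (l₁ l₂ : List ℕ), l₁.Pairwise (· < ·) → l₂.Pairwise (· < ·) →
    l₁.length = l₂.length →
    (∀ v : ℕ, (l₁.filter (fun m => v ≤ m)).length ≤ (l₂.filter (fun m => v ≤ m)).length) →
    List.Forall₂ (· ≤ ·) l₁ l₂
  | [], [], _, _, _, _ => List.Forall₂.nil
  | [], _ :: _, _, _, hlen, _ => by simp at hlen
  | _ :: _, [], _, _, hlen, _ => by simp at hlen
  | a :: s, b :: t, h₁, h₂, hlen, h => by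
    obtain ⟨ha, hs⟩ := List.pairwise_cons.mp h₁
    obtain ⟨hb, ht⟩ := List.pairwise_cons.mp h₂
    have hlen' : s.length = t.length := by simpa using hlen
    have hab : a ≤ b := by
      by_contra hba
      push_neg at hba
      have h1 : (List.filter (fun m => decide (b + 1 ≤ m)) (a :: s)).length = s.length + 1 := by
        rw [List.filter_eq_self.mpr]
        · simp
        · intro m hm
          simp only [List.mem_cons] at hm
          rcases hm with rfl | hm
          · simpa using hba
          · have := ha m hm
            simp; omega
      have h2 : (List.filter (fun m => decide (b + 1 ≤ m)) (b :: t)).length ≤ t.length := by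
        rw [List.filter_cons_of_neg (by simp)]
        exact (List.length_filter_le _ _)
      have := h (b + 1)
      omega
    refine List.Forall₂.cons hab (forall₂_of_filter_counts s t hs ht hlen' ?_)
    intro v
    rcases le_or_gt v a with hva | hva
    · have := h v
      rw [List.filter_cons_of_pos (by simpa using hva),
        List.filter_cons_of_pos (by simp; omega)] at this
      simpa using this
    rcases le_or_gt v b with hvb | hvb
    · have : List.filter (fun m => decide (v ≤ m)) t = t := by
        rw [List.filter_eq_self.mpr]
        intro m hm
        have := hb m hm
        simp; omega
      rw [this, ← hlen']
      exact List.length_filter_le _ _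
    · have := h v
      rw [List.filter_cons_of_neg (by simp; omega),
        List.filter_cons_of_neg (by simp; omega)] at this
      exact this

private lemma length_filter_sort (S : Finset ℕ) (v : ℕ) :
    ((S.sort (· ≤ ·)).filter (fun m => v ≤ m)).length = (S.filter (fun m => v ≤ m)).card := by
  have h1 : (S.filter (fun m => v ≤ m)).card
      = Multiset.card (S.val.filter (fun m => v ≤ m)) := rfl
  rw [h1, ← Finset.sort_eq S (· ≤ ·), Multiset.filter_coe, Multiset.coe_card]

private lemma length_filter_initSeg {n : ℕ} (x : Fin n → ℕ) (hinj : Function.Injective x)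
    (j v : ℕ) :
    ((initSeg x j).filter (fun m => v ≤ m)).length
      = (Finset.univ.filter fun i : Fin n => (i : ℕ) < j ∧ v ≤ x i).card := by
  rw [initSeg, length_filter_sort, Finset.filter_image,
    Finset.card_image_of_injective _ hinj, Finset.filter_filter]

private lemma length_initSeg {n : ℕ} (x : Fin n → ℕ) (hinj : Function.Injective x) (j : ℕ) :
    (initSeg x j).length = (Finset.univ.filter fun i : Fin n => (i : ℕ) < j).card := by
  rw [initSeg, Finset.length_sort, Finset.card_image_of_injective _ hinj]

private lemma rle_of_counts {n : ℕ} {lam : Partition n} (x y : Placement lam)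
    (h : ∀ j v : ℕ,
      (Finset.univ.filter fun i : Fin n => (i : ℕ) < j ∧ v ≤ x.col i).card
        ≤ (Finset.univ.filter fun i : Fin n => (i : ℕ) < j ∧ v ≤ y.col i).card) :
    rle x y := by
  intro j
  refine forall₂_of_filter_counts (initSeg x.col j) (initSeg y.col j)
    (Finset.sortedLT_sort _).pairwise (Finset.sortedLT_sort _).pairwise ?_ ?_
  · rw [length_initSeg _ x.inj, length_initSeg _ y.inj]
  · intro v
    rw [length_filter_initSeg _ x.inj, length_filter_initSeg _ y.inj]
    exact h j v

private lemma card_filter_lt (n j : ℕ) :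
    (Finset.univ.filter fun i : Fin n => (i : ℕ) < j).card = min j n := by
  rw [← Finset.card_image_of_injective _ Fin.val_injective]
  have : (Finset.univ.filter fun i : Fin n => (i : ℕ) < j).image Fin.val
      = Finset.range (min j n) := by
    ext m
    simp only [Finset.mem_image, Finset.mem_filter, Finset.mem_univ, true_and,
      Finset.mem_range, lt_min_iff]
    constructor
    · rintro ⟨i, hi, rfl⟩
      exact ⟨hi, i.2⟩
    · rintro ⟨h1, h2⟩
      exact ⟨⟨m, h2⟩, h1, rfl⟩
  rw [this, Finset.card_range]

/-! ### The greedy placement -/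

private def gcols {n : ℕ} (part : Fin n → ℕ) : ℕ → List ℕ
  | 0 => []
  | (i+1) => gcols part i ++
      [WithBot.unbotD 0 ((Finset.Icc 1 (if h : i < n then part ⟨i, h⟩ else 0)).filter
          fun m => m ∉ gcols part i).max]

private def gcol {n : ℕ} (part : Fin n → ℕ) (i : ℕ) : ℕ :=
  WithBot.unbotD 0 ((Finset.Icc 1 (if h : i < n then part ⟨i, h⟩ else 0)).filter
      fun m => m ∉ gcols part i).max

private lemma gcols_succ {n : ℕ} (part : Fin n → ℕ) (i : ℕ) :
    gcols part (i + 1) = gcols part i ++ [gcol part i] := rfl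

private lemma gcols_length {n : ℕ} (part : Fin n → ℕ) (i : ℕ) :
    (gcols part i).length = i := by
  induction i with
  | zero => rfl
  | succ i ih => rw [gcols_succ]; simp [ih]

private lemma mem_gcols {n : ℕ} (part : Fin n → ℕ) (i : ℕ) (m : ℕ) :
    m ∈ gcols part i ↔ ∃ k, k < i ∧ gcol part k = m := by
  induction i with
  | zero => simp [gcols]
  | succ i ih =>
    rw [gcols_succ]
    simp only [List.mem_append, List.mem_singleton, ih]
    constructor
    · rintro (⟨k, hk, rfl⟩ | rfl)
      · exact ⟨k, by omega, rfl⟩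
      · exact ⟨i, by omega, rfl⟩
    · rintro ⟨k, hk, rfl⟩
      rcases Nat.lt_or_ge k i with h | h
      · exact Or.inl ⟨k, h, rfl⟩
      · exact Or.inr (congrArg (gcol part) (by omega))

private lemma gcol_props {n : ℕ} (lam : Partition n) (i : ℕ) (h : i < n) :
    gcol lam.part i ∈
        ((Finset.Icc 1 (lam.part ⟨i, h⟩)).filter fun m => m ∉ gcols lam.part i) ∧
      ∀ m ∈ ((Finset.Icc 1 (lam.part ⟨i, h⟩)).filter fun m => m ∉ gcols lam.part i),
        m ≤ gcol lam.part i := by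
  set s := ((Finset.Icc 1 (lam.part ⟨i, h⟩)).filter fun m => m ∉ gcols lam.part i) with hsdef
  have hne : s.Nonempty := by
    rw [← Finset.card_pos]
    have hsplit := Finset.card_filter_add_card_filter_not
      (s := Finset.Icc 1 (lam.part ⟨i, h⟩)) (p := fun m => m ∉ gcols lam.part i)
    have hIcc : (Finset.Icc 1 (lam.part ⟨i, h⟩)).card = lam.part ⟨i, h⟩ := by
      rw [Nat.card_Icc]; omega
    have hneg : ((Finset.Icc 1 (lam.part ⟨i, h⟩)).filter
        fun m => ¬ m ∉ gcols lam.part i).card ≤ i := by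
      have hsub : ((Finset.Icc 1 (lam.part ⟨i, h⟩)).filter
          fun m => ¬ m ∉ gcols lam.part i) ⊆ (gcols lam.part i).toFinset := by
        intro m hm
        simp only [Finset.mem_filter, not_not] at hm
        simpa using hm.2
      calc _ ≤ (gcols lam.part i).toFinset.card := Finset.card_le_card hsub
        _ ≤ (gcols lam.part i).length := (gcols lam.part i).toFinset_card_le
        _ = i := gcols_length _ _
    have hst : i + 1 ≤ lam.part ⟨i, h⟩ := lam.staircase ⟨i, h⟩
    have hpos : s.card + ((Finset.Icc 1 (lam.part ⟨i, h⟩)).filter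
        fun m => ¬ m ∉ gcols lam.part i).card = (Finset.Icc 1 (lam.part ⟨i, h⟩)).card := hsplit
    omega
  obtain ⟨a, ha⟩ := Finset.max_of_nonempty hne
  have hgc : gcol lam.part i = a := by
    rw [gcol, dif_pos h, ← hsdef, ha, WithBot.unbotD_coe]
  constructor
  · rw [hgc]; exact Finset.mem_of_max ha
  · intro m hm
    have := Finset.le_max hm
    rw [ha, hgc] at *
    exact_mod_cast this

private def topP {n : ℕ} (lam : Partition n) : Placement lam where
  col i := gcol lam.part i
  inj := by
    have key : ∀ i k : Fin n, (i : ℕ) < (k : ℕ) → gcol lam.part (i : ℕ) ≠ gcol lam.part (k : ℕ) := by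
      intro i k hik heq
      have hk := (gcol_props lam k k.2).1
      simp only [Finset.mem_filter] at hk
      exact hk.2 ((mem_gcols _ _ _).mpr ⟨i, hik, heq⟩)
    intro i k hik
    by_contra hne
    rcases Nat.lt_or_ge (i : ℕ) (k : ℕ) with hlt | hge
    · exact key i k hlt hik
    · have hlt : (k : ℕ) < (i : ℕ) := by
        rcases Nat.lt_or_ge (k : ℕ) (i : ℕ) with h' | h'
        · exact h'
        · exact absurd (Fin.ext (by omega)) hne
      exact key k i hlt hik.symm
  pos i := by
    have := (gcol_props lam i i.2).1
    simp only [Finset.mem_filter, Finset.mem_Icc] at this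
    exact this.1.1
  le_part i := by
    have := (gcol_props lam i i.2).1
    simp only [Finset.mem_filter, Finset.mem_Icc] at this
    simpa using this.1.2

private lemma topP_greedy {n : ℕ} (lam : Partition n) : IsGreedy (topP lam) := by
  intro i m h1 h2 hunused
  have hnot : m ∉ gcols lam.part (i : ℕ) := by
    intro hmem
    obtain ⟨k, hk, hkeq⟩ := (mem_gcols _ _ _).mp hmem
    exact hunused ⟨k, by omega⟩ (by simpa [Fin.lt_def] using hk) hkeq
  have := (gcol_props lam i i.2).2 m (by
    simp only [Finset.mem_filter, Finset.mem_Icc]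
    exact ⟨⟨h1, by simpa using h2⟩, hnot⟩)
  exact this

/-! ### The counting argument -/

private lemma count_le_greedy {n : ℕ} {lam : Partition n} (x t : Placement lam)
    (ht : IsGreedy t) (j v : ℕ) :
    (Finset.univ.filter fun i : Fin n => (i : ℕ) < j ∧ v ≤ x.col i).card
      ≤ (Finset.univ.filter fun i : Fin n => (i : ℕ) < j ∧ v ≤ t.col i).card := by
  induction j with
  | zero => simp
  | succ j ih =>
    have hsplit : ∀ f : Fin n → ℕ,
        (Finset.univ.filter fun i : Fin n => (i : ℕ) < j + 1 ∧ v ≤ f i).card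
          = (Finset.univ.filter fun i : Fin n => (i : ℕ) < j ∧ v ≤ f i).card
            + (Finset.univ.filter fun i : Fin n => (i : ℕ) = j ∧ v ≤ f i).card := by
      intro f
      rw [← Finset.card_union_of_disjoint (by
        simp only [Finset.disjoint_left, Finset.mem_filter, Finset.mem_univ, true_and]
        rintro i ⟨h1, _⟩ ⟨h2, _⟩
        omega)]
      congr 1
      ext i
      simp only [Finset.mem_filter, Finset.mem_univ, true_and, Finset.mem_union]
      constructor
      · rintro ⟨h1, h2⟩
        rcases Nat.lt_or_ge (i : ℕ) j with h' | h'
        · exact Or.inl ⟨h', h2⟩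
        · exact Or.inr ⟨by omega, h2⟩
      · rintro (⟨h1, h2⟩ | ⟨h1, h2⟩) <;> exact ⟨by omega, h2⟩
    rw [hsplit x.col, hsplit t.col]
    rcases Nat.lt_or_ge j n with hj | hj
    · set jf : Fin n := ⟨j, hj⟩ with hjf
      have hBsub : ∀ f : Fin n → ℕ,
          (Finset.univ.filter fun i : Fin n => (i : ℕ) = j ∧ v ≤ f i) ⊆ {jf} := by
        intro f i hi
        simp only [Finset.mem_filter, Finset.mem_univ, true_and] at hi
        simp only [Finset.mem_singleton]
        exact Fin.ext hi.1
      rcases le_or_gt v (t.col jf) with hvt | hvt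
      · have hBt : jf ∈ (Finset.univ.filter fun i : Fin n => (i : ℕ) = j ∧ v ≤ t.col i) :=
          Finset.mem_filter.mpr ⟨Finset.mem_univ _, rfl, hvt⟩
        have h1 : 1 ≤ (Finset.univ.filter fun i : Fin n => (i : ℕ) = j ∧ v ≤ t.col i).card :=
          Finset.card_pos.mpr ⟨jf, hBt⟩
        have h2 : (Finset.univ.filter fun i : Fin n => (i : ℕ) = j ∧ v ≤ x.col i).card ≤ 1 := by
          simpa using Finset.card_le_card (hBsub x.col)
        omega
      rcases le_or_gt v (x.col jf) with hvx | hvx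
      · -- hard case: x places ≥ v at row j but greedy does not
        have key : ∀ m, v ≤ m → m ≤ lam.part jf →
            ∃ k : Fin n, (k : ℕ) < j ∧ v ≤ t.col k ∧ t.col k = m := by
          intro m hm1 hm2
          by_contra hcon
          push_neg at hcon
          have : m ≤ t.col jf := by
            apply ht jf m (by omega) hm2
            intro k hk heq
            have hkj : (k : ℕ) < j := hk
            exact hcon k hkj (heq ▸ hm1) heq
          omega
        have h1 : Finset.Icc v (lam.part jf) ⊆
            (Finset.univ.filter fun i : Fin n => (i : ℕ) < j ∧ v ≤ t.col i).image t.col := by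
          intro m hm
          rw [Finset.mem_Icc] at hm
          obtain ⟨k, hk1, hk2, hk3⟩ := key m hm.1 hm.2
          exact Finset.mem_image.mpr ⟨k, by simp [hk1, hk2], hk3⟩
        have h2 : lam.part jf + 1 - v
            ≤ (Finset.univ.filter fun i : Fin n => (i : ℕ) < j ∧ v ≤ t.col i).card := by
          calc lam.part jf + 1 - v = (Finset.Icc v (lam.part jf)).card := (Nat.card_Icc _ _).symm
            _ ≤ _ := Finset.card_le_card h1
            _ ≤ _ := Finset.card_image_le
        have h3 : ((Finset.univ.filter fun i : Fin n => (i : ℕ) < j + 1 ∧ v ≤ x.col i).image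
            x.col) ⊆ Finset.Icc v (lam.part jf) := by
          intro m hm
          obtain ⟨i, hi, rfl⟩ := Finset.mem_image.mp hm
          simp only [Finset.mem_filter, Finset.mem_univ, true_and] at hi
          rw [Finset.mem_Icc]
          refine ⟨hi.2, le_trans (x.le_part i) (lam.mono ?_)⟩
          rw [Fin.le_def]
          simp only [hjf]
          omega
        have h4 : (Finset.univ.filter fun i : Fin n => (i : ℕ) < j + 1 ∧ v ≤ x.col i).card
            ≤ lam.part jf + 1 - v := by
          calc _ = ((Finset.univ.filter fun i : Fin n =>
                (i : ℕ) < j + 1 ∧ v ≤ x.col i).image x.col).card :=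
              (Finset.card_image_of_injective _ x.inj).symm
            _ ≤ (Finset.Icc v (lam.part jf)).card := Finset.card_le_card h3
            _ = lam.part jf + 1 - v := Nat.card_Icc _ _
        rw [← hsplit x.col]
        omega
      · -- x does not place ≥ v at row j
        have hBx : (Finset.univ.filter fun i : Fin n => (i : ℕ) = j ∧ v ≤ x.col i) = ∅ := by
          rw [Finset.eq_empty_iff_forall_notMem]
          intro i hi
          simp only [Finset.mem_filter, Finset.mem_univ, true_and] at hi
          have : i = jf := Fin.ext hi.1
          rw [this] at hi
          omega
        rw [hBx]
        simp only [Finset.card_empty, Nat.add_zero]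
        omega
    · -- j ≥ n : the new row does not exist
      have hB : ∀ f : Fin n → ℕ,
          (Finset.univ.filter fun i : Fin n => (i : ℕ) = j ∧ v ≤ f i) = ∅ := by
        intro f
        rw [Finset.eq_empty_iff_forall_notMem]
        intro i hi
        simp only [Finset.mem_filter, Finset.mem_univ, true_and] at hi
        have := i.2
        omega
      rw [hB x.col, hB t.col]
      simpa using ih

/-! ### The bottom placement -/

private def botP {n : ℕ} (lam : Partition n) : Placement lam where
  col i := (i : ℕ) + 1
  inj := by
    intro i k h
    have h' : (i : ℕ) + 1 = (k : ℕ) + 1 := h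
    exact Fin.ext (by omega)
  pos i := Nat.le_add_left 1 _
  le_part i := lam.staircase i

private lemma count_bot_le {n : ℕ} {lam : Partition n} (x : Placement lam) (j v : ℕ) :
    (Finset.univ.filter fun i : Fin n => (i : ℕ) < j ∧ v ≤ (botP lam).col i).card
      ≤ (Finset.univ.filter fun i : Fin n => (i : ℕ) < j ∧ v ≤ x.col i).card := by
  have hsplit : ∀ f : Fin n → ℕ,
      (Finset.univ.filter fun i : Fin n => (i : ℕ) < j ∧ v ≤ f i).card
        + ((Finset.univ.filter fun i : Fin n => (i : ℕ) < j).filter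
            fun i => ¬ v ≤ f i).card
        = (Finset.univ.filter fun i : Fin n => (i : ℕ) < j).card := by
    intro f
    rw [← Finset.filter_filter]
    exact Finset.card_filter_add_card_filter_not _
  have hx := hsplit x.col
  have hb := hsplit (botP lam).col
  have hF : (Finset.univ.filter fun i : Fin n => (i : ℕ) < j).card = min j n :=
    card_filter_lt n j
  have hnegx : ((Finset.univ.filter fun i : Fin n => (i : ℕ) < j).filter
      fun i => ¬ v ≤ x.col i).card ≤ v - 1 := by
    have hsub : ((Finset.univ.filter fun i : Fin n => (i : ℕ) < j).filter
        fun i => ¬ v ≤ x.col i).image x.col ⊆ Finset.Icc 1 (v - 1) := by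
      intro m hm
      obtain ⟨i, hi, rfl⟩ := Finset.mem_image.mp hm
      simp only [Finset.mem_filter, Finset.mem_univ, true_and, not_le] at hi
      rw [Finset.mem_Icc]
      exact ⟨x.pos i, by omega⟩
    calc _ = (((Finset.univ.filter fun i : Fin n => (i : ℕ) < j).filter
          fun i => ¬ v ≤ x.col i).image x.col).card :=
        (Finset.card_image_of_injective _ x.inj).symm
      _ ≤ (Finset.Icc 1 (v - 1)).card := Finset.card_le_card hsub
      _ = v - 1 := by rw [Nat.card_Icc]; omega
  have hnegb : ((Finset.univ.filter fun i : Fin n => (i : ℕ) < j).filter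
      fun i => ¬ v ≤ (botP lam).col i).card = min (min j (v - 1)) n := by
    rw [Finset.filter_filter]
    have heq : (Finset.univ.filter fun i : Fin n => (i : ℕ) < j ∧ ¬ v ≤ (botP lam).col i)
        = Finset.univ.filter fun i : Fin n => (i : ℕ) < min j (v - 1) := by
      ext i
      simp only [Finset.mem_filter, Finset.mem_univ, true_and, botP, not_le, lt_min_iff]
      omega
    rw [heq, card_filter_lt]
  omega

/-! ### Statement 1 -/

/-- The rook poset has a maximum, given by the greedy placement, and a
minimum, given by `(1, 2, …, n)`. -/
theorem rookPoset_has_top_and_bot {n : ℕ} (lam : Partition n) :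
    (∃ t : Placement lam, IsGreedy t ∧ ∀ x : Placement lam, rle x t) ∧
    (∃ b : Placement lam, (∀ i : Fin n, b.col i = (i : ℕ) + 1) ∧
      ∀ x : Placement lam, rle b x) := by
  constructor
  · exact ⟨topP lam, topP_greedy lam, fun x =>
      rle_of_counts x (topP lam) (fun j v => count_le_greedy x (topP lam) (topP_greedy lam) j v)⟩
  · exact ⟨botP lam, fun i => rfl, fun x =>
      rle_of_counts (botP lam) x (fun j v => count_bot_le x j v)⟩

end RookPoset
end

section
/- Let λ be a partition with n parts and λ_n = n + 1, and let λ′ be its conjugate. Then the rook posets P_λ and P_{λ′} are isomorphic as partially ordered sets. -/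
namespace RookPoset

lemma countP_le_of_forall2 {s t : List ℕ} (h : List.Forall₂ (· ≤ ·) s t) (m : ℕ) :
    t.countP (fun a => a ≤ m) ≤ s.countP (fun a => a ≤ m) := by
  induction h with
  | nil => simp
  | @cons a b s' t' hab h ih =>
    simp only [List.countP_cons]
    by_cases hb : b ≤ m
    · have ha : a ≤ m := le_trans hab hb
      simp [ha, hb]
      omega
    · simp [hb]
      omega

lemma forall2_of_countP : ∀ {s t : List ℕ}, s.Pairwise (· ≤ ·) → t.Pairwise (· ≤ ·) →
    s.length = t.length →
    (∀ m, t.countP (fun a => a ≤ m) ≤ s.countP (fun a => a ≤ m)) →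
    List.Forall₂ (· ≤ ·) s t
  | [], [], _, _, _, _ => List.Forall₂.nil
  | [], _ :: _, _, _, hl, _ => by simp at hl
  | _ :: _, [], _, _, hl, _ => by simp at hl
  | a :: s', b :: t', hs, ht, hl, h => by
    have hs' := hs.of_cons
    have ht' := ht.of_cons
    have hsa := (List.pairwise_cons.mp hs).1
    have htb := (List.pairwise_cons.mp ht).1
    have hab : a ≤ b := by
      by_contra hba
      have h2 := h b
      have h1 : (a :: s').countP (fun x => x ≤ b) = 0 := by
        rw [List.countP_eq_zero]
        intro x hx
        simp only [decide_eq_true_eq]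
        rcases List.mem_cons.mp hx with rfl | hx
        · omega
        · have := hsa x hx; omega
      simp only [List.countP_cons, h1] at h2
      simp at h2
    refine List.Forall₂.cons hab (forall2_of_countP hs' ht' (by simpa using hl) ?_)
    intro m
    by_cases ham : a ≤ m
    · have hm := h m
      simp only [List.countP_cons] at hm
      by_cases hbm : b ≤ m
      · simp [ham, hbm] at hm; omega
      · have h0 : t'.countP (fun a => a ≤ m) = 0 := by
          rw [List.countP_eq_zero]
          intro x hx
          simp only [decide_eq_true_eq]
          have := htb x hx; omega
        omega
    · have hbm : ¬ b ≤ m := fun hbm => ham (le_trans hab hbm)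
      have h0 : t'.countP (fun a => a ≤ m) = 0 := by
        rw [List.countP_eq_zero]
        intro x hx
        simp only [decide_eq_true_eq]
        have := htb x hx; omega
      omega

lemma sort_countP (F : Finset ℕ) (m : ℕ) :
    (F.sort (· ≤ ·)).countP (fun a => a ≤ m) = (F.filter (fun a => a ≤ m)).card := by
  rw [List.Perm.countP_eq _ (Finset.sort_perm_toList F (· ≤ ·))]
  have : (F.toList.countP fun a => a ≤ m) = Multiset.countP (fun a => a ≤ m) F.val := by
    rw [← Finset.coe_toList F, Multiset.coe_countP]
  rw [this, Multiset.countP_eq_card_filter]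
  rfl


def cnt {n : ℕ} (x : Fin n → ℕ) (j m : ℕ) : ℕ :=
  (Finset.univ.filter fun i : Fin n => (i : ℕ) < j ∧ x i ≤ m).card

lemma initSeg_countP {n : ℕ} (x : Fin n → ℕ) (hx : Function.Injective x) (j m : ℕ) :
    (initSeg x j).countP (fun a => a ≤ m) = cnt x j m := by
  unfold initSeg cnt
  rw [sort_countP, Finset.filter_image, Finset.card_image_of_injective _ hx,
    Finset.filter_filter]

lemma initSeg_length {n : ℕ} (x : Fin n → ℕ) (hx : Function.Injective x) (j : ℕ) :
    (initSeg x j).length = (Finset.univ.filter fun i : Fin n => (i : ℕ) < j).card := by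
  unfold initSeg
  rw [Finset.length_sort, Finset.card_image_of_injective _ hx]

lemma rle_iff_cnt {n : ℕ} (x y : Fin n → ℕ) (hx : Function.Injective x)
    (hy : Function.Injective y) :
    (∀ j, List.Forall₂ (· ≤ ·) (initSeg x j) (initSeg y j)) ↔
      ∀ j m, cnt y j m ≤ cnt x j m := by
  constructor
  · intro h j m
    rw [← initSeg_countP x hx, ← initSeg_countP y hy]
    exact countP_le_of_forall2 (h j) m
  · intro h j
    refine forall2_of_countP (Finset.pairwise_sort _ _) (Finset.pairwise_sort _ _) ?_ ?_
    · rw [initSeg_length x hx, initSeg_length y hy]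
    · intro m
      rw [initSeg_countP x hx, initSeg_countP y hy]
      exact h j m


variable {n : ℕ}

def Good (x : Fin n → ℕ) : Prop :=
  Function.Injective x ∧ (∀ i, 1 ≤ x i) ∧ ∀ i, x i ≤ n + 1

noncomputable def miss (x : Fin n → ℕ) : ℕ :=
  sInf {v | 1 ≤ v ∧ v ≤ n + 1 ∧ ∀ k, x k ≠ v}

lemma missSet_nonempty (x : Fin n → ℕ) :
    {v | 1 ≤ v ∧ v ≤ n + 1 ∧ ∀ k, x k ≠ v}.Nonempty := by
  have h : (Finset.Icc 1 (n + 1) \ Finset.univ.image x).Nonempty := by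
    rw [← Finset.card_pos]
    have h1 : (Finset.univ.image x).card ≤ n := by
      refine le_trans (Finset.card_image_le) ?_
      simp
    have h2 : (Finset.Icc 1 (n + 1)).card = n + 1 := by
      rw [Nat.card_Icc]; omega
    have := Finset.card_le_card_sdiff_add_card (s := Finset.Icc 1 (n+1)) (t := Finset.univ.image x)
    omega
  obtain ⟨v, hv⟩ := h
  simp only [Finset.mem_sdiff, Finset.mem_Icc, Finset.mem_image, Finset.mem_univ,
    true_and, not_exists] at hv
  exact ⟨v, hv.1.1, hv.1.2, fun k => hv.2 k⟩

lemma miss_spec (x : Fin n → ℕ) :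
    1 ≤ miss x ∧ miss x ≤ n + 1 ∧ ∀ k, x k ≠ miss x :=
  Nat.sInf_mem (missSet_nonempty x)

lemma miss_unique {x : Fin n → ℕ} (hx : Good x) {v : ℕ} (h1 : 1 ≤ v) (h2 : v ≤ n + 1)
    (h3 : ∀ k, x k ≠ v) : v = miss x := by
  obtain ⟨hinj, hpos, hub⟩ := hx
  have hsub : Finset.univ.image x ⊆ Finset.Icc 1 (n + 1) := by
    intro a ha
    simp only [Finset.mem_image, Finset.mem_univ, true_and] at ha
    obtain ⟨i, rfl⟩ := ha
    simp only [Finset.mem_Icc]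
    exact ⟨hpos i, hub i⟩
  have hcard : (Finset.Icc 1 (n + 1) \ Finset.univ.image x).card = 1 := by
    rw [Finset.card_sdiff_of_subset hsub, Finset.card_image_of_injective _ hinj, Nat.card_Icc]
    simp
  have hmem : ∀ w, 1 ≤ w → w ≤ n + 1 → (∀ k, x k ≠ w) →
      w ∈ Finset.Icc 1 (n + 1) \ Finset.univ.image x := by
    intro w hw1 hw2 hw3
    simp only [Finset.mem_sdiff, Finset.mem_Icc, Finset.mem_image, Finset.mem_univ, true_and,
      not_exists]
    exact ⟨⟨hw1, hw2⟩, fun k => hw3 k⟩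
  obtain ⟨hm1, hm2, hm3⟩ := miss_spec x
  exact Finset.card_le_one.mp (le_of_eq hcard) _ (hmem v h1 h2 h3) _ (hmem _ hm1 hm2 hm3)

noncomputable def sig (x : Fin n → ℕ) (a : ℕ) : ℕ :=
  if h : 1 ≤ a ∧ a ≤ n then x ⟨a - 1, by omega⟩ else miss x

noncomputable def invx (x : Fin n → ℕ) (v : ℕ) : ℕ :=
  if h : ∃ k : Fin n, x k = v then ((Classical.choose h : Fin n) : ℕ) + 1 else n + 1

lemma sig_pos {x : Fin n → ℕ} (hx : Good x) (a : ℕ) : 1 ≤ sig x a := by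
  unfold sig; split
  · exact hx.2.1 _
  · exact (miss_spec x).1

lemma sig_ub {x : Fin n → ℕ} (hx : Good x) (a : ℕ) : sig x a ≤ n + 1 := by
  unfold sig; split
  · exact hx.2.2 _
  · exact (miss_spec x).2.1

lemma invx_pos (x : Fin n → ℕ) (v : ℕ) : 1 ≤ invx x v := by
  unfold invx; split <;> omega

lemma invx_ub (x : Fin n → ℕ) (v : ℕ) : invx x v ≤ n + 1 := by
  unfold invx; split
  · rename_i h
    have := (Classical.choose h).isLt
    omega
  · omega

lemma invx_sig {x : Fin n → ℕ} (hx : Good x) {a : ℕ} (h1 : 1 ≤ a) (h2 : a ≤ n + 1) :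
    invx x (sig x a) = a := by
  by_cases h : a ≤ n
  · have hs : sig x a = x ⟨a - 1, by omega⟩ := dif_pos ⟨h1, h⟩
    rw [hs]
    unfold invx
    have hex : ∃ k : Fin n, x k = x ⟨a - 1, by omega⟩ := ⟨_, rfl⟩
    rw [dif_pos hex]
    have hcs : ((Classical.choose hex : Fin n) : ℕ) = a - 1 :=
      congrArg Fin.val (hx.1 (Classical.choose_spec hex))
    omega
  · have ha : a = n + 1 := by omega
    have hs : sig x a = miss x := dif_neg (by omega)
    rw [hs, ha]
    unfold invx
    rw [dif_neg]
    rintro ⟨k, hk⟩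
    exact (miss_spec x).2.2 k hk

lemma sig_invx {x : Fin n → ℕ} (hx : Good x) {v : ℕ} (h1 : 1 ≤ v) (h2 : v ≤ n + 1) :
    sig x (invx x v) = v := by
  unfold invx
  split
  · rename_i h
    have hc := Classical.choose_spec h
    have hlt := (Classical.choose h).isLt
    unfold sig
    rw [dif_pos (by omega)]
    have he : (⟨((Classical.choose h : Fin n) : ℕ) + 1 - 1, by omega⟩ : Fin n) = Classical.choose h :=
      Fin.ext (by simp)
    rw [he]
    exact hc
  · rename_i h
    push_neg at h
    have hs : sig x (n + 1) = miss x := dif_neg (by omega)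
    rw [hs]
    exact (miss_unique hx h1 h2 h).symm

lemma sig_inj {x : Fin n → ℕ} (hx : Good x) {a b : ℕ} (ha1 : 1 ≤ a) (ha2 : a ≤ n + 1)
    (hb1 : 1 ≤ b) (hb2 : b ≤ n + 1) (h : sig x a = sig x b) : a = b := by
  have := congrArg (invx x) h
  rwa [invx_sig hx ha1 ha2, invx_sig hx hb1 hb2] at this

noncomputable def reflMap (x : Fin n → ℕ) : Fin n → ℕ := fun i =>
  n + 2 - invx x (n + 1 - (i : ℕ))

lemma reflMap_good {x : Fin n → ℕ} (hx : Good x) : Good (reflMap x) := by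
  refine ⟨?_, ?_, ?_⟩
  · intro i j h
    unfold reflMap at h
    have h1 := invx_pos x (n + 1 - (i : ℕ))
    have h2 := invx_ub x (n + 1 - (i : ℕ))
    have h3 := invx_pos x (n + 1 - (j : ℕ))
    have h4 := invx_ub x (n + 1 - (j : ℕ))
    have heq : invx x (n + 1 - (i : ℕ)) = invx x (n + 1 - (j : ℕ)) := by omega
    have hi := i.isLt
    have hj := j.isLt
    have := congrArg (sig x) heq
    rw [sig_invx hx (by omega) (by omega), sig_invx hx (by omega) (by omega)] at this
    exact Fin.ext (by omega)
  · intro i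
    have := invx_ub x (n + 1 - (i : ℕ))
    unfold reflMap
    omega
  · intro i
    have := invx_pos x (n + 1 - (i : ℕ))
    unfold reflMap
    omega

lemma sig_reflMap {x : Fin n → ℕ} (hx : Good x) {a : ℕ} (h1 : 1 ≤ a) (h2 : a ≤ n + 1) :
    sig (reflMap x) a = n + 2 - invx x (n + 2 - a) := by
  by_cases h : a ≤ n
  · have hs : sig (reflMap x) a = reflMap x ⟨a - 1, by omega⟩ := dif_pos ⟨h1, h⟩
    rw [hs]
    unfold reflMap
    congr 2
    simp
    omega
  · have ha : a = n + 1 := by omega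
    subst ha
    have hs : sig (reflMap x) (n + 1) = miss (reflMap x) := dif_neg (by omega)
    rw [hs]
    have hn2 : n + 2 - (n + 1) = 1 := by omega
    rw [hn2]
    have hi1 := invx_pos x 1
    have hi2 := invx_ub x 1
    refine (miss_unique (reflMap_good hx) (by omega) (by omega) ?_).symm
    intro k hk
    unfold reflMap at hk
    have h3 := invx_pos x (n + 1 - (k : ℕ))
    have h4 := invx_ub x (n + 1 - (k : ℕ))
    have heq : invx x (n + 1 - (k : ℕ)) = invx x 1 := by omega
    have := congrArg (sig x) heq
    have hklt := k.isLt
    rw [sig_invx hx (by omega) (by omega), sig_invx hx (by omega) (by omega)] at this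
    omega

lemma invx_reflMap {x : Fin n → ℕ} (hx : Good x) {v : ℕ} (h1 : 1 ≤ v) (h2 : v ≤ n + 1) :
    invx (reflMap x) v = n + 2 - sig x (n + 2 - v) := by
  set a := n + 2 - sig x (n + 2 - v) with ha
  have hsp := sig_pos hx (n + 2 - v)
  have hsu := sig_ub hx (n + 2 - v)
  have ha1 : 1 ≤ a := by omega
  have ha2 : a ≤ n + 1 := by omega
  have hsy : sig (reflMap x) a = v := by
    rw [sig_reflMap hx ha1 ha2]
    have h3 : n + 2 - a = sig x (n + 2 - v) := by omega
    rw [h3, invx_sig hx (by omega) (by omega)]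
    omega
  rw [← hsy, invx_sig (reflMap_good hx) ha1 ha2]

lemma reflMap_reflMap {x : Fin n → ℕ} (hx : Good x) : reflMap (reflMap x) = x := by
  funext i
  have hi := i.isLt
  show n + 2 - invx (reflMap x) (n + 1 - (i : ℕ)) = x i
  rw [invx_reflMap hx (by omega) (by omega)]
  have h3 : n + 2 - (n + 1 - (i : ℕ)) = (i : ℕ) + 1 := by omega
  rw [h3]
  have hsp := sig_pos hx ((i : ℕ) + 1)
  have hsu := sig_ub hx ((i : ℕ) + 1)
  have hs : sig x ((i : ℕ) + 1) = x i := by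
    have he : (⟨(i : ℕ) + 1 - 1, by omega⟩ : Fin n) = i := Fin.ext (by simp)
    unfold sig
    rw [dif_pos (by omega), he]
  omega

noncomputable def cntC (x : Fin n → ℕ) (j m : ℕ) : ℕ :=
  ((Finset.Icc 1 (n + 1)).filter fun a => a ≤ j ∧ sig x a ≤ m).card

lemma cntC_cap {x : Fin n → ℕ} (hx : Good x) (j m : ℕ) :
    cntC x j m = cntC x (min j (n + 1)) (min m (n + 1)) := by
  unfold cntC
  congr 1
  apply Finset.filter_congr
  intro a ha
  simp only [Finset.mem_Icc] at ha
  have h1 := sig_ub hx a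
  constructor <;> intro h <;> constructor <;> omega

lemma cntC_partition {x : Fin n → ℕ} (j m : ℕ) (hj : j ≤ n + 1) :
    cntC x j m + ((Finset.Icc 1 (n + 1)).filter fun a => a ≤ j ∧ m < sig x a).card = j := by
  have hs : (Finset.Icc 1 (n + 1)).filter (fun a => a ≤ j) = Finset.Icc 1 j := by
    ext a
    simp only [Finset.mem_filter, Finset.mem_Icc]
    omega
  have h1 : ((Finset.Icc 1 (n + 1)).filter fun a => a ≤ j ∧ sig x a ≤ m)
      = ((Finset.Icc 1 (n + 1)).filter (fun a => a ≤ j)).filter (fun a => sig x a ≤ m) := by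
    rw [Finset.filter_filter]
  have h2 : ((Finset.Icc 1 (n + 1)).filter fun a => a ≤ j ∧ m < sig x a)
      = ((Finset.Icc 1 (n + 1)).filter (fun a => a ≤ j)).filter (fun a => ¬ sig x a ≤ m) := by
    rw [Finset.filter_filter]
    apply Finset.filter_congr
    intro a _
    omega
  unfold cntC
  rw [h1, h2, Finset.card_filter_add_card_filter_not, hs, Nat.card_Icc]
  omega

lemma cnt_reflect {x : Fin n → ℕ} (hx : Good x) (j m : ℕ) (hj : j ≤ n + 1) (hm : m ≤ n + 1) :
    ((Finset.Icc 1 (n + 1)).filter fun a => a ≤ j ∧ m < sig (reflMap x) a).card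
      = ((Finset.Icc 1 (n + 1)).filter fun c => c ≤ n + 1 - m ∧ n + 1 - j < sig x c).card := by
  apply Finset.card_bij (fun a _ => invx x (n + 2 - a))
  · intro a ha
    simp only [Finset.mem_filter, Finset.mem_Icc] at ha ⊢
    obtain ⟨⟨ha1, ha2⟩, haj, hma⟩ := ha
    rw [sig_reflMap hx ha1 ha2] at hma
    have hip := invx_pos x (n + 2 - a)
    have hiu := invx_ub x (n + 2 - a)
    have hsv : sig x (invx x (n + 2 - a)) = n + 2 - a := sig_invx hx (by omega) (by omega)
    refine ⟨⟨hip, hiu⟩, by omega, ?_⟩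
    rw [hsv]
    omega
  · intro a ha a' ha' h
    simp only [Finset.mem_filter, Finset.mem_Icc] at ha ha'
    have := congrArg (sig x) h
    rw [sig_invx hx (by omega) (by omega), sig_invx hx (by omega) (by omega)] at this
    omega
  · intro c hc
    simp only [Finset.mem_filter, Finset.mem_Icc] at hc
    obtain ⟨⟨hc1, hc2⟩, hcm, hcj⟩ := hc
    have hsp := sig_pos hx c
    have hsu := sig_ub hx c
    refine ⟨n + 2 - sig x c, ?_, ?_⟩
    · simp only [Finset.mem_filter, Finset.mem_Icc]
      have h3 : n + 2 - (n + 2 - sig x c) = sig x c := by omega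
      refine ⟨⟨by omega, by omega⟩, by omega, ?_⟩
      rw [sig_reflMap hx (by omega) (by omega), h3, invx_sig hx (by omega) (by omega)]
      omega
    · have h3 : n + 2 - (n + 2 - sig x c) = sig x c := by omega
      rw [h3, invx_sig hx (by omega) (by omega)]

lemma cntC_reflect {x : Fin n → ℕ} (hx : Good x) (j m : ℕ) (hj : j ≤ n + 1) (hm : m ≤ n + 1) :
    cntC (reflMap x) j m + (n + 1 - m) = j + cntC x (n + 1 - m) (n + 1 - j) := by
  have h1 := cntC_partition (x := reflMap x) j m hj
  have h2 := cntC_partition (x := x) (n + 1 - m) (n + 1 - j) (by omega)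
  rw [cnt_reflect hx j m hj hm] at h1
  omega

lemma cnt_eq_cntC {x : Fin n → ℕ} (hx : Good x) (j m : ℕ) (hj : j ≤ n) :
    cnt x j m = cntC x j m := by
  apply Finset.card_bij (fun (i : Fin n) _ => (i : ℕ) + 1)
  · intro i hi
    simp only [Finset.mem_filter, Finset.mem_univ, true_and] at hi
    simp only [Finset.mem_filter, Finset.mem_Icc]
    have hlt := i.isLt
    have hs : sig x ((i : ℕ) + 1) = x i := by
      have he : (⟨(i : ℕ) + 1 - 1, by omega⟩ : Fin n) = i := Fin.ext (by simp)
      unfold sig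
      rw [dif_pos (by omega), he]
    rw [hs]
    exact ⟨⟨by omega, by omega⟩, by omega, hi.2⟩
  · intro i _ i' _ h
    exact Fin.ext (by omega)
  · intro a ha
    simp only [Finset.mem_filter, Finset.mem_Icc] at ha
    obtain ⟨⟨ha1, ha2⟩, haj, ham⟩ := ha
    refine ⟨⟨a - 1, by omega⟩, ?_, by simp; omega⟩
    simp only [Finset.mem_filter, Finset.mem_univ, true_and]
    have hs : sig x a = x ⟨a - 1, by omega⟩ := dif_pos ⟨ha1, by omega⟩
    rw [hs] at ham
    exact ⟨by show a - 1 < j; omega, ham⟩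

lemma cntC_full {x : Fin n → ℕ} (hx : Good x) (j m : ℕ) (hj : n + 1 ≤ j) :
    cntC x j m = ((Finset.Icc 1 (n + 1)).filter fun v => v ≤ m).card := by
  apply Finset.card_bij (fun a _ => sig x a)
  · intro a ha
    simp only [Finset.mem_filter, Finset.mem_Icc] at ha ⊢
    exact ⟨⟨sig_pos hx a, sig_ub hx a⟩, ha.2.2⟩
  · intro a ha a' ha' h
    simp only [Finset.mem_filter, Finset.mem_Icc] at ha ha'
    exact sig_inj hx ha.1.1 ha.1.2 ha'.1.1 ha'.1.2 h
  · intro v hv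
    simp only [Finset.mem_filter, Finset.mem_Icc] at hv
    obtain ⟨⟨hv1, hv2⟩, hvm⟩ := hv
    refine ⟨invx x v, ?_, sig_invx hx hv1 hv2⟩
    simp only [Finset.mem_filter, Finset.mem_Icc]
    have := invx_pos x v
    have := invx_ub x v
    rw [sig_invx hx hv1 hv2]
    exact ⟨⟨by omega, by omega⟩, by omega, hvm⟩

lemma cnt_stable (x : Fin n → ℕ) (j m : ℕ) (hj : n ≤ j) : cnt x j m = cnt x n m := by
  unfold cnt
  congr 1
  apply Finset.filter_congr
  intro i _
  have := i.isLt
  constructor <;> intro h <;> exact ⟨by omega, h.2⟩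

lemma cnt_le_iff_cntC {x z : Fin n → ℕ} (hx : Good x) (hz : Good z) :
    (∀ j m, cnt z j m ≤ cnt x j m) ↔ (∀ j m, cntC z j m ≤ cntC x j m) := by
  constructor
  · intro h j m
    by_cases hj : j ≤ n
    · rw [← cnt_eq_cntC hx j m hj, ← cnt_eq_cntC hz j m hj]
      exact h j m
    · rw [cntC_full hx j m (by omega), cntC_full hz j m (by omega)]
  · intro h j m
    by_cases hj : j ≤ n
    · rw [cnt_eq_cntC hx j m hj, cnt_eq_cntC hz j m hj]
      exact h j m
    · rw [cnt_stable x j m (by omega), cnt_stable z j m (by omega),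
        cnt_eq_cntC hx n m le_rfl, cnt_eq_cntC hz n m le_rfl]
      exact h n m

lemma cntC_le_reflMap {x z : Fin n → ℕ} (hx : Good x) (hz : Good z)
    (h : ∀ j m, cntC z j m ≤ cntC x j m) :
    ∀ j m, cntC (reflMap z) j m ≤ cntC (reflMap x) j m := by
  intro j m
  rw [cntC_cap (reflMap_good hz), cntC_cap (reflMap_good hx)]
  set j' := min j (n + 1) with hj'
  set m' := min m (n + 1) with hm'
  have hj1 : j' ≤ n + 1 := min_le_right _ _
  have hm1 : m' ≤ n + 1 := min_le_right _ _
  have e1 := cntC_reflect hz j' m' hj1 hm1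
  have e2 := cntC_reflect hx j' m' hj1 hm1
  have h3 := h (n + 1 - m') (n + 1 - j')
  omega

lemma cnt_le_iff_reflMap {x z : Fin n → ℕ} (hx : Good x) (hz : Good z) :
    (∀ j m, cnt z j m ≤ cnt x j m) ↔
      (∀ j m, cnt (reflMap z) j m ≤ cnt (reflMap x) j m) := by
  rw [cnt_le_iff_cntC hx hz, cnt_le_iff_cntC (reflMap_good hx) (reflMap_good hz)]
  constructor
  · exact cntC_le_reflMap hx hz
  · intro h
    have := cntC_le_reflMap (reflMap_good hx) (reflMap_good hz) h
    rwa [reflMap_reflMap hx, reflMap_reflMap hz] at this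


lemma rle_iff_cnt_placement {n : ℕ} {lam : Partition n} (x y : Placement lam) :
    rle x y ↔ ∀ j m, cnt y.col j m ≤ cnt x.col j m :=
  rle_iff_cnt x.col y.col x.inj y.inj

lemma placement_ext {n : ℕ} {lam : Partition n} {x y : Placement lam}
    (h : x.col = y.col) : x = y := by
  cases x
  cases y
  simp only [Placement.mk.injEq]
  exact h

lemma partAt_top {n : ℕ} (lam : Partition n) : lam.partAt (n + 1) = n + 1 :=
  dif_neg (by omega)

lemma partAt_coe {n : ℕ} (lam : Partition n) (k : Fin n) :
    lam.partAt ((k : ℕ) + 1) = lam.part k := by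
  have hk := k.isLt
  unfold Partition.partAt
  rw [dif_pos ⟨by omega, by omega⟩]
  congr 1

/-- If `λ` has `n` parts with `λ_n = n + 1` and `λ'` is its conjugate,
given by `λ'_i = n + 2 - min {k | λ_k ≥ n + 2 - i}` (with the convention `λ_{n+1} = n + 1`),
then the rook posets of `λ` and `λ'` are isomorphic. -/
theorem rookIso_conjugate {n : ℕ} (hn : 0 < n) (lam lam' : Partition n)
    (hlast : lam.partAt n = n + 1)
    (hconj : ∀ i : Fin n, lam'.part i =
      n + 2 - sInf {k : ℕ | 1 ≤ k ∧ n + 2 - ((i : ℕ) + 1) ≤ lam.partAt k}) :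
    RookIso lam lam' := by
  have hlast' : lam.part ⟨n - 1, by omega⟩ = n + 1 := by
    have : lam.partAt n = lam.part ⟨n - 1, by omega⟩ := dif_pos ⟨hn, le_rfl⟩
    omega
  have hub_lam : ∀ i : Fin n, lam.part i ≤ n + 1 := by
    intro i
    have hi := i.isLt
    have := lam.mono (show i ≤ (⟨n - 1, by omega⟩ : Fin n) from by
      rw [Fin.le_def]; simp; omega)
    omega
  have hgoodL : ∀ x : Placement lam, Good x.col := fun x =>
    ⟨x.inj, x.pos, fun i => le_trans (x.le_part i) (hub_lam i)⟩
  have hnmem : ∀ r : Fin n, n ∈ {k : ℕ | 1 ≤ k ∧ n + 2 - ((r : ℕ) + 1) ≤ lam.partAt k} := by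
    intro r
    simp only [Set.mem_setOf_eq]
    refine ⟨hn, ?_⟩
    rw [hlast]
    omega
  have hub_lam' : ∀ i : Fin n, lam'.part i ≤ n + 1 := by
    intro i
    rw [hconj i]
    have hmem := Nat.sInf_mem ⟨n, hnmem i⟩
    have h1 : 1 ≤ sInf {k : ℕ | 1 ≤ k ∧ n + 2 - ((i : ℕ) + 1) ≤ lam.partAt k} := hmem.1
    omega
  have hgoodR : ∀ y : Placement lam', Good y.col := fun y =>
    ⟨y.inj, y.pos, fun i => le_trans (y.le_part i) (hub_lam' i)⟩
  have hboundE : ∀ x : Placement lam, ∀ i : Fin n, reflMap x.col i ≤ lam'.part i := by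
    intro x i
    rw [hconj i]
    have hi := i.isLt
    have key : sInf {k : ℕ | 1 ≤ k ∧ n + 2 - ((i : ℕ) + 1) ≤ lam.partAt k}
        ≤ invx x.col (n + 1 - (i : ℕ)) := by
      apply Nat.sInf_le
      simp only [Set.mem_setOf_eq]
      unfold invx
      split
      · rename_i h
        have hck : x.col (Classical.choose h) = n + 1 - (i : ℕ) := Classical.choose_spec h
        have hklt := (Classical.choose h).isLt
        refine ⟨by omega, ?_⟩
        rw [partAt_coe]
        have := x.le_part (Classical.choose h)
        omega
      · refine ⟨by omega, ?_⟩
        rw [partAt_top]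
        omega
    exact Nat.sub_le_sub_left key _
  have hboundF : ∀ y : Placement lam', ∀ i : Fin n, reflMap y.col i ≤ lam.part i := by
    intro y i
    have hi := i.isLt
    show n + 2 - invx y.col (n + 1 - (i : ℕ)) ≤ lam.part i
    unfold invx
    split
    · rename_i h
      have hcr : y.col (Classical.choose h) = n + 1 - (i : ℕ) := Classical.choose_spec h
      have hrlt := (Classical.choose h).isLt
      have hyb := y.le_part (Classical.choose h)
      rw [hconj (Classical.choose h), hcr] at hyb
      have hmn : sInf {k : ℕ | 1 ≤ k ∧
          n + 2 - (((Classical.choose h : Fin n) : ℕ) + 1) ≤ lam.partAt k} ≤ n :=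
        Nat.sInf_le (hnmem _)
      have hmem := Nat.sInf_mem ⟨n, hnmem (Classical.choose h)⟩
      obtain ⟨hm1, hm2⟩ := hmem
      set m := sInf {k : ℕ | 1 ≤ k ∧
        n + 2 - (((Classical.choose h : Fin n) : ℕ) + 1) ≤ lam.partAt k} with hmdef
      have hmi : m - 1 ≤ (i : ℕ) := by omega
      have hpm : lam.partAt m = lam.part ⟨m - 1, by omega⟩ := dif_pos ⟨hm1, hmn⟩
      have hmono := lam.mono (show (⟨m - 1, by omega⟩ : Fin n) ≤ i from by
        rw [Fin.le_def]; simpa using hmi)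
      rw [hpm] at hm2
      omega
    · have := lam.staircase i
      omega
  refine ⟨⟨fun x => ⟨reflMap x.col, (reflMap_good (hgoodL x)).1,
      (reflMap_good (hgoodL x)).2.1, hboundE x⟩,
    fun y => ⟨reflMap y.col, (reflMap_good (hgoodR y)).1,
      (reflMap_good (hgoodR y)).2.1, hboundF y⟩, ?_, ?_⟩, ?_⟩
  · intro x
    exact placement_ext (reflMap_reflMap (hgoodL x))
  · intro y
    exact placement_ext (reflMap_reflMap (hgoodR y))
  · intro a b
    simp only [Equiv.coe_fn_mk]
    rw [rle_iff_cnt_placement a b, rle_iff_cnt_placement]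
    exact cnt_le_iff_reflMap (hgoodL a) (hgoodL b)

end RookPoset
end
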